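/- For every integer t ≥ 0, T_t((1/4)·J₂ ⊗ (P_m + P_mᵀ + 2·I_m) − I_{2m}) = (1/4)·J₂ ⊗ (P_m^t + (P_mᵀ)^t − 2·(−1)^t·I_m) + (−1)^t·I_{2m}. In particular, if m is even then the value at t = m is I_{2m} (periodicity of the toroidal (2,m)-grid at time m), and if m is odd then the value at t = m is J₂ ⊗ I_m − I_{2m} (perfect state transfer from vertex (0,i) to vertex (1,i) at time m, and periodicity at time 2m). -/

import Mathlib

open Matrix Polynomial Kronecker

private lemma cheb_step19 {n : Type*} [Fintype n] [DecidableEq n]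
    (J : Matrix (Fin 2) (Fin 2) ℝ) (hJJ : J * J = (2:ℝ) • J)
    (Q A₀ A₁ A₂ : Matrix n n ℝ) (e : ℝ)
    (hmul : Q * A₁ = A₂ + A₀ + (2:ℝ) • A₁ + (2*e) • Q) :
    2 * (((1/4:ℝ) • (J ⊗ₖ Q) - 1) * ((1/4:ℝ) • (J ⊗ₖ A₁) + (-e) • 1))
      - ((1/4:ℝ) • (J ⊗ₖ A₀) + e • 1)
    = (1/4:ℝ) • (J ⊗ₖ A₂) + e • 1 := by
  have h1 : (J ⊗ₖ Q) * (J ⊗ₖ A₁) = (2:ℝ) • (J ⊗ₖ (Q * A₁)) := by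
    rw [← Matrix.mul_kronecker_mul, hJJ, Matrix.smul_kronecker]
  simp only [sub_mul, mul_add, Matrix.smul_mul, Matrix.mul_smul, h1, hmul, two_mul,
    Matrix.kronecker_add, Matrix.kronecker_smul, mul_one, one_mul]
  match_scalars <;> ring

private lemma inner_step19 {n : Type*} [Fintype n] [DecidableEq n]
    (P : Matrix n n ℝ) (h1 : P * Pᵀ = 1) (h2 : Pᵀ * P = 1) (t : ℕ) :
    (P + Pᵀ + 2 • (1 : Matrix n n ℝ)) *
        (P ^ (t+1) + Pᵀ ^ (t+1) - (2 * (-1:ℝ) ^ (t+1)) • 1)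
      = (P ^ (t+2) + Pᵀ ^ (t+2) - (2 * (-1:ℝ) ^ (t+2)) • 1)
        + (P ^ t + Pᵀ ^ t - (2 * (-1:ℝ) ^ t) • 1)
        + (2:ℝ) • (P ^ (t+1) + Pᵀ ^ (t+1) - (2 * (-1:ℝ) ^ (t+1)) • 1)
        + (2 * (-1:ℝ) ^ t) • (P + Pᵀ + 2 • (1 : Matrix n n ℝ)) := by
  have e1 : P * P ^ (t+1) = P ^ (t+2) := by rw [← pow_succ']
  have e2 : Pᵀ * Pᵀ ^ (t+1) = Pᵀ ^ (t+2) := by rw [← pow_succ']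
  have e3 : P * Pᵀ ^ (t+1) = Pᵀ ^ t := by rw [pow_succ', ← mul_assoc, h1, one_mul]
  have e4 : Pᵀ * P ^ (t+1) = P ^ t := by rw [pow_succ', ← mul_assoc, h2, one_mul]
  simp only [add_mul, mul_sub, mul_add, Matrix.smul_mul, Matrix.mul_smul,
    mul_one, one_mul, e1, e2, e3, e4]
  match_scalars <;> ring

theorem stmt_19 (m : ℕ) [NeZero m]
    (P : Matrix (Fin m) (Fin m) ℝ)
    (hP : ∀ i : Fin m, P *ᵥ Pi.single i 1 = Pi.single (i - 1) 1)
    (J₂ : Matrix (Fin 2) (Fin 2) ℝ) (hJ : J₂ = Matrix.of fun _ _ => 1)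
    (B₁ : Matrix (Fin 2 × Fin m) (Fin 2 × Fin m) ℝ)
    (hB₁ : B₁ = (1 / 4 : ℝ) • (J₂ ⊗ₖ (P + Pᵀ + 2 • (1 : Matrix (Fin m) (Fin m) ℝ))) - 1) :
    (∀ t : ℕ,
      Polynomial.aeval B₁ (Polynomial.Chebyshev.T ℝ t)
        = (1 / 4 : ℝ) • (J₂ ⊗ₖ (P ^ t + Pᵀ ^ t
            - (2 * (-1 : ℝ) ^ t) • (1 : Matrix (Fin m) (Fin m) ℝ)))
          + ((-1 : ℝ) ^ t) • 1) ∧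
    (Even m → Polynomial.aeval B₁ (Polynomial.Chebyshev.T ℝ m) = 1) ∧
    (Odd m →
      Polynomial.aeval B₁ (Polynomial.Chebyshev.T ℝ m)
        = J₂ ⊗ₖ (1 : Matrix (Fin m) (Fin m) ℝ) - 1 ∧
      Polynomial.aeval B₁ (Polynomial.Chebyshev.T ℝ (2 * m)) = 1) := by
  -- entries of P
  have hPe : ∀ j i : Fin m, P j i = if j = i - 1 then 1 else 0 := by
    intro j i
    have := congrFun (hP i) j
    simpa [Matrix.mulVec_single, Pi.single_apply] using this
  -- P * Pᵀ = 1
  have h1 : P * Pᵀ = 1 := by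
    ext j k
    simp only [Matrix.mul_apply, Matrix.transpose_apply, hPe, Matrix.one_apply]
    simp [eq_sub_iff_add_eq]
  have h2 : Pᵀ * P = 1 := mul_eq_one_comm.mp h1
  -- powers of P
  open Fin.NatCast in
  have hPow : ∀ t : ℕ, ∀ j i : Fin m, (P ^ t) j i = if j = i - (t : Fin m) then 1 else 0 := by
    intro t
    induction t with
    | zero => simp [Matrix.one_apply]
    | succ t ih =>
      intro j i
      rw [pow_succ, Matrix.mul_apply]
      simp only [ih, hPe, mul_ite, ite_mul, one_mul, mul_one, mul_zero, zero_mul]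
      rw [Finset.sum_ite_eq' Finset.univ (i - 1)]
      simp only [Finset.mem_univ, if_true, sub_sub]
      rw [add_comm]
      push_cast
      rfl
  have hPm : P ^ m = 1 := by
    ext j i
    open Fin.NatCast in
    rw [hPow m j i]
    open Fin.NatCast in
    simp [Matrix.one_apply, Fin.natCast_self]
  have hPTm : Pᵀ ^ m = 1 := by rw [← Matrix.transpose_pow, hPm, Matrix.transpose_one]
  -- J₂ * J₂ = 2 • J₂
  have hJJ : J₂ * J₂ = (2:ℝ) • J₂ := by
    subst hJ
    ext i j
    simp [Matrix.mul_apply, Fin.sum_univ_two]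
  -- main formula by two-step induction
  have main : ∀ t : ℕ,
      Polynomial.aeval B₁ (Polynomial.Chebyshev.T ℝ t)
        = (1 / 4 : ℝ) • (J₂ ⊗ₖ (P ^ t + Pᵀ ^ t
            - (2 * (-1 : ℝ) ^ t) • (1 : Matrix (Fin m) (Fin m) ℝ)))
          + ((-1 : ℝ) ^ t) • 1 := by
    intro t
    induction t using Nat.twoStepInduction with
    | zero =>
      simp only [Nat.cast_zero, Polynomial.Chebyshev.T_zero, _root_.map_one, pow_zero]
      have : (1 : Matrix (Fin m) (Fin m) ℝ) + 1 - (2 * (1:ℝ)) • 1 = 0 := by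
        match_scalars; ring
      rw [this]
      simp
    | one =>
      simp only [Nat.cast_one, Polynomial.Chebyshev.T_one, Polynomial.aeval_X, hB₁, pow_one]
      have hin : P + Pᵀ - (2 * (-1:ℝ)) • (1 : Matrix (Fin m) (Fin m) ℝ) = P + Pᵀ + 2 • 1 := by
        match_scalars <;> ring
      rw [hin]
      module
    | more t ih1 ih2 =>
      have hcast : ((t + 2 : ℕ) : ℤ) = (t : ℤ) + 2 := by push_cast; ring
      rw [hcast, Polynomial.Chebyshev.T_add_two, _root_.map_sub, _root_.map_mul, _root_.map_mul, _root_.map_ofNat,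
        Polynomial.aeval_X]
      have hcast1 : ((t : ℤ) + 1) = ((t + 1 : ℕ) : ℤ) := by push_cast; ring
      rw [hcast1, ih2, ih1]
      rw [hB₁, mul_assoc]
      have hneg : ((-1 : ℝ) ^ (t+1)) = -((-1:ℝ)^t) := by ring
      rw [hneg]
      have h22 : ((-1:ℝ)) ^ (t+2) = (-1:ℝ) ^ t := by ring
      rw [h22]
      have hi := inner_step19 P h1 h2 t
      rw [h22] at hi
      have := cheb_step19 J₂ hJJ (P + Pᵀ + 2 • (1 : Matrix (Fin m) (Fin m) ℝ))
        (P ^ t + Pᵀ ^ t - (2 * (-1:ℝ) ^ t) • 1)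
        (P ^ (t+1) + Pᵀ ^ (t+1) - (2 * (-1:ℝ) ^ (t+1)) • 1)
        (P ^ (t+2) + Pᵀ ^ (t+2) - (2 * (-1:ℝ) ^ t) • 1)
        ((-1:ℝ)^t) hi
      rw [hneg] at this
      exact this
  refine ⟨main, ?_, ?_⟩
  · intro hm
    rw [main m, hPm, hPTm, hm.neg_one_pow]
    have : (1 : Matrix (Fin m) (Fin m) ℝ) + 1 - (2 * (1:ℝ)) • 1 = 0 := by
      match_scalars; ring
    rw [this]
    simp
  · intro hm
    constructor
    · rw [main m, hPm, hPTm, hm.neg_one_pow]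
      have : (1 : Matrix (Fin m) (Fin m) ℝ) + 1 - (2 * (-1:ℝ)) • 1 = (4:ℝ) • 1 := by
        match_scalars; ring
      rw [this, Matrix.kronecker_smul, smul_smul]
      module
    · have hc2 : (2 * (m:ℤ)) = ((2*m : ℕ) : ℤ) := by push_cast; ring
      rw [hc2, main (2*m)]
      have hp2 : P ^ (2*m) = 1 := by rw [two_mul, pow_add, hPm, one_mul]
      have hp2T : Pᵀ ^ (2*m) = 1 := by rw [two_mul, pow_add, hPTm, one_mul]
      have he : ((-1:ℝ)) ^ (2*m) = 1 := by rw [pow_mul]; norm_num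
      rw [hp2, hp2T, he]
      have : (1 : Matrix (Fin m) (Fin m) ℝ) + 1 - (2 * (1:ℝ)) • 1 = 0 := by
        match_scalars; ring
      rw [this]
      simp
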